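/- Let (G,⊕) be a finite group and let L(G) be its Cayley table Latin square. Let ℓ₁,…,ℓ_k be distinct lines of L(G), fix a row r ∈ G and a column c ∈ G, and for each i define c_i* ∈ G by: c_i* = g if ℓ_i is the column-line of g; c_i* = r⁻¹ ⊕ g if ℓ_i is the symbol-line of g; c_i* = r⁻¹ ⊕ g ⊕ c if ℓ_i is the row-line of g. Set s_i = c_i* ⊕ c⁻¹ and let K = ⟨s₁,…,s_k⟩ be the subgroup of G generated by s₁,…,s_k. If S is a subsquare of L(G) that intersects the row-line of r, the column-line of c, and each line ℓ_i, and S is contained in every subsquare of L(G) with that property, then the set of columns intersecting S equals the coset K ⊕ c = {h ⊕ c : h ∈ K} and the set of rows intersecting S equals the coset r ⊕ K = {r ⊕ h : h ∈ K}. -/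
import Mathlib


open Finset

/-- An entry of a Latin square with rows/columns/symbols indexed by `X`. -/
abbrev Entry (X : Type*) := X × X × X

/-- A line of a Latin square: a tag (0 = row, 1 = column, 2 = symbol) and an index. -/
abbrev Line (X : Type*) := Fin 3 × X

/-- The entry `e` lies on the line `ℓ`. -/
def onLine {X : Type*} (e : Entry X) (ℓ : Line X) : Prop :=
  (ℓ.1 = 0 ∧ e.1 = ℓ.2) ∨ (ℓ.1 = 1 ∧ e.2.1 = ℓ.2) ∨ (ℓ.1 = 2 ∧ e.2.2 = ℓ.2)

instance {X : Type*} [DecidableEq X] (e : Entry X) (ℓ : Line X) : Decidable (onLine e ℓ) := by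
  unfold onLine; infer_instance

/-- `L` is a Latin square (on the full index set `X`). -/
def IsLatin {X : Type*} (L : Finset (Entry X)) : Prop :=
  (∀ r c : X, ∃! s : X, (r, c, s) ∈ L) ∧
  (∀ r s : X, ∃! c : X, (r, c, s) ∈ L) ∧
  (∀ c s : X, ∃! r : X, (r, c, s) ∈ L)

/-- Lazy-burning closure in the hypergraph `H_L`: vertices are the entries of `L`,
hyperedges are the lines of `L`; a vertex burns if it is the unique unburned vertex of
a hyperedge of size at least 2. -/
inductive BurnedHL {X : Type*} [DecidableEq X] (L S : Finset (Entry X)) : Entry X → Prop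
  | init {e : Entry X} : e ∈ S → BurnedHL L S e
  | prop {e : Entry X} (ℓ : Line X) : e ∈ L → onLine e ℓ →
      2 ≤ (L.filter (fun f => onLine f ℓ)).card →
      (∀ f ∈ L, onLine f ℓ → f ≠ e → BurnedHL L S f) → BurnedHL L S e

/-- `S` is a lazy burning set of the hypergraph `H_L`. -/
def IsLazyBurningSetHL {X : Type*} [DecidableEq X] (L S : Finset (Entry X)) : Prop :=
  S ⊆ L ∧ ∀ e ∈ L, BurnedHL L S e

/-- The lazy burning number of `H_L`. -/
noncomputable def lbHL {X : Type*} [DecidableEq X] (L : Finset (Entry X)) : ℕ :=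
  sInf {k | ∃ S : Finset (Entry X), IsLazyBurningSetHL L S ∧ S.card = k}

/-- A cover of `L`: a set of entries of `L` meeting every line. -/
def IsCover {X : Type*} (L C : Finset (Entry X)) : Prop :=
  C ⊆ L ∧ ∀ ℓ : Line X, ∃ e ∈ C, onLine e ℓ

/-- A weak cover-sequence of `L`: each entry lies on a line containing no earlier entry. -/
def IsWeakCoverSeq {X : Type*} (L : Finset (Entry X)) (es : List (Entry X)) : Prop :=
  (∀ e ∈ es, e ∈ L) ∧
  ∀ i : Fin es.length, ∃ ℓ : Line X, onLine (es.get i) ℓ ∧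
    ∀ j : Fin es.length, (j : ℕ) < (i : ℕ) → ¬ onLine (es.get j) ℓ

/-- A cover-sequence of `L`: a weak cover-sequence whose entries form a cover. -/
def IsCoverSeq {X : Type*} (L : Finset (Entry X)) (es : List (Entry X)) : Prop :=
  IsWeakCoverSeq L es ∧ ∀ ℓ : Line X, ∃ e ∈ es, onLine e ℓ

/-- `mcs L`: the maximum length of a cover-sequence of `L`. -/
noncomputable def mcs {X : Type*} (L : Finset (Entry X)) : ℕ :=
  sSup {d | ∃ es : List (Entry X), IsCoverSeq L es ∧ es.length = d}

/-- `T` is a subsquare of `L`: `T = L ∩ (R × C × S)` with `|R| = |C| = |S|`, and `T`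
is itself a Latin square on rows `R`, columns `C`, symbols `S`. -/
def IsSubsquare {X : Type*} [DecidableEq X] (L T : Finset (Entry X)) : Prop :=
  ∃ R C S : Finset X, R.card = C.card ∧ C.card = S.card ∧
    T = L.filter (fun e => e.1 ∈ R ∧ e.2.1 ∈ C ∧ e.2.2 ∈ S) ∧
    (∀ r ∈ R, ∀ c ∈ C, ∃! s, s ∈ S ∧ (r, c, s) ∈ T) ∧
    (∀ r ∈ R, ∀ s ∈ S, ∃! c, c ∈ C ∧ (r, c, s) ∈ T) ∧
    (∀ c ∈ C, ∀ s ∈ S, ∃! r, r ∈ R ∧ (r, c, s) ∈ T)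

/-- `Sq 0 ⊆ Sq 1 ⊆ ⋯ ⊆ Sq α` is a connected chain of subsquares of `L`, from the empty
subsquare through a single entry up to `L` itself. -/
def IsConnectedChain {X : Type*} [DecidableEq X] (L : Finset (Entry X)) (α : ℕ)
    (Sq : ℕ → Finset (Entry X)) : Prop :=
  1 ≤ α ∧ Sq 0 = ∅ ∧ (Sq 1).card = 1 ∧ Sq α = L ∧
  (∀ i ≤ α, IsSubsquare L (Sq i)) ∧
  (∀ i < α, Sq i ⊆ Sq (i + 1)) ∧
  (∀ i, 1 ≤ i → i ≤ α → ∃ ℓ : Line X,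
      (∃ e ∈ Sq i, onLine e ℓ) ∧ ¬(∃ e ∈ Sq (i - 1), onLine e ℓ) ∧
      (∀ T, IsSubsquare L T → Sq (i - 1) ⊆ T → (∃ e ∈ T, onLine e ℓ) → Sq i ⊆ T))

/-- `scc L`: the minimum length of a connected chain of subsquares of `L`. -/
noncomputable def scc {X : Type*} [DecidableEq X] (L : Finset (Entry X)) : ℕ :=
  sInf {α | ∃ Sq : ℕ → Finset (Entry X), IsConnectedChain L α Sq}

/-- Lazy-burning closure in the 3-uniform hypergraph `H^L`: vertices are the lines of `L`,
and each entry of `L` induces the hyperedge consisting of its three lines. -/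
inductive BurnedH3 {X : Type*} (L : Finset (Entry X)) (S : Finset (Line X)) : Line X → Prop
  | init {ℓ : Line X} : ℓ ∈ S → BurnedH3 L S ℓ
  | prop {ℓ : Line X} (e : Entry X) : e ∈ L → onLine e ℓ →
      (∀ ℓ' : Line X, onLine e ℓ' → ℓ' ≠ ℓ → BurnedH3 L S ℓ') → BurnedH3 L S ℓ

/-- `S` is a lazy burning set of the 3-uniform hypergraph `H^L`. -/
def IsLazyBurningSetH3 {X : Type*} (L : Finset (Entry X)) (S : Finset (Line X)) : Prop :=
  ∀ ℓ : Line X, BurnedH3 L S ℓ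

/-- The lazy burning number of `H^L`. -/
noncomputable def lbH3 {X : Type*} (L : Finset (Entry X)) : ℕ :=
  sInf {k | ∃ S : Finset (Line X), IsLazyBurningSetH3 L S ∧ S.card = k}

lemma coset_subsquare {G : Type*} [Group G] [Fintype G] [DecidableEq G]
    (LG : Finset (Entry G)) (hLG : LG = Finset.univ.filter (fun e => e.1 * e.2.1 = e.2.2))
    (K : Subgroup G) [DecidablePred (· ∈ K)] (r c : G) :
    IsSubsquare LG (LG.filter (fun e =>
      e.1 ∈ Finset.univ.filter (fun g => r⁻¹ * g ∈ K) ∧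
      e.2.1 ∈ Finset.univ.filter (fun g => g * c⁻¹ ∈ K) ∧
      e.2.2 ∈ Finset.univ.filter (fun g => r⁻¹ * g * c⁻¹ ∈ K))) := by
  have memT : ∀ e : Entry G, (e ∈ LG.filter (fun e =>
      e.1 ∈ Finset.univ.filter (fun g => r⁻¹ * g ∈ K) ∧
      e.2.1 ∈ Finset.univ.filter (fun g => g * c⁻¹ ∈ K) ∧
      e.2.2 ∈ Finset.univ.filter (fun g => r⁻¹ * g * c⁻¹ ∈ K))) ↔
      e.1 * e.2.1 = e.2.2 ∧ r⁻¹ * e.1 ∈ K ∧ e.2.1 * c⁻¹ ∈ K ∧ r⁻¹ * e.2.2 * c⁻¹ ∈ K := by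
    intro e
    simp [hLG, Finset.mem_filter, and_assoc]
  refine ⟨_, _, _, ?_, ?_, rfl, ?_, ?_, ?_⟩
  · apply Finset.card_bij (fun g _ => r⁻¹ * g * c)
    · intro a ha
      simp only [Finset.mem_filter, Finset.mem_univ, true_and] at ha ⊢
      have h : r⁻¹ * a * c * c⁻¹ = r⁻¹ * a := by group
      rw [h]; exact ha
    · intro a _ b _ h
      exact mul_left_cancel (mul_right_cancel h)
    · intro b hb
      refine ⟨r * (b * c⁻¹), by
        simp only [Finset.mem_filter, Finset.mem_univ, true_and] at hb ⊢
        have h : r⁻¹ * (r * (b * c⁻¹)) = b * c⁻¹ := by group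
        rw [h]; exact hb, by group⟩
  · apply Finset.card_bij (fun g _ => r * g)
    · intro a ha
      simp only [Finset.mem_filter, Finset.mem_univ, true_and] at ha ⊢
      have h : r⁻¹ * (r * a) * c⁻¹ = a * c⁻¹ := by group
      rw [h]; exact ha
    · intro a _ b _ h
      exact mul_left_cancel h
    · intro b hb
      refine ⟨r⁻¹ * b, by
        simp only [Finset.mem_filter, Finset.mem_univ, true_and] at hb ⊢
        have h : r⁻¹ * b * c⁻¹ = r⁻¹ * b * c⁻¹ := rfl
        exact hb, by group⟩
  · intro a ha b hb
    simp only [Finset.mem_filter, Finset.mem_univ, true_and] at ha hb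
    refine ⟨a * b, ⟨by
      simp only [Finset.mem_filter, Finset.mem_univ, true_and]
      have h : r⁻¹ * (a * b) * c⁻¹ = (r⁻¹ * a) * (b * c⁻¹) := by group
      rw [h]; exact mul_mem ha hb, (memT _).2 ⟨rfl, ha, hb, by
        have h : r⁻¹ * (a * b) * c⁻¹ = (r⁻¹ * a) * (b * c⁻¹) := by group
        rw [h]; exact mul_mem ha hb⟩⟩, ?_⟩
    rintro y ⟨-, hyT⟩
    exact (((memT _).1 hyT).1).symm
  · intro a ha σ hσ
    simp only [Finset.mem_filter, Finset.mem_univ, true_and] at ha hσ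
    have hcmem : a⁻¹ * σ * c⁻¹ ∈ K := by
      have h : a⁻¹ * σ * c⁻¹ = (r⁻¹ * a)⁻¹ * (r⁻¹ * σ * c⁻¹) := by group
      rw [h]; exact mul_mem (inv_mem ha) hσ
    refine ⟨a⁻¹ * σ, ⟨by
      simp only [Finset.mem_filter, Finset.mem_univ, true_and]
      exact hcmem, (memT _).2 ⟨by group, ha, hcmem, hσ⟩⟩, ?_⟩
    rintro y ⟨-, hyT⟩
    have := ((memT _).1 hyT).1
    simp only at this
    rw [← this]; group
  · intro b hb σ hσ
    simp only [Finset.mem_filter, Finset.mem_univ, true_and] at hb hσ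
    have hrmem : r⁻¹ * (σ * b⁻¹) ∈ K := by
      have h : r⁻¹ * (σ * b⁻¹) = (r⁻¹ * σ * c⁻¹) * (b * c⁻¹)⁻¹ := by group
      rw [h]; exact mul_mem hσ (inv_mem hb)
    refine ⟨σ * b⁻¹, ⟨by
      simp only [Finset.mem_filter, Finset.mem_univ, true_and]
      exact hrmem, (memT _).2 ⟨by group, hrmem, hb, hσ⟩⟩, ?_⟩
    rintro y ⟨-, hyT⟩
    have := ((memT _).1 hyT).1
    simp only at this
    rw [← this]; group

theorem stmt17 {G : Type*} [Group G] [Fintype G] [DecidableEq G]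
    (LG : Finset (Entry G)) (hLG : LG = Finset.univ.filter (fun e => e.1 * e.2.1 = e.2.2))
    (k : ℕ) (ℓ : Fin k → Line G) (hdist : Function.Injective ℓ)
    (r c : G) (cstar : Fin k → G)
    (hcstar : ∀ i, cstar i =
      if (ℓ i).1 = 1 then (ℓ i).2
      else if (ℓ i).1 = 2 then r⁻¹ * (ℓ i).2
      else r⁻¹ * (ℓ i).2 * c)
    (s : Fin k → G) (hs : ∀ i, s i = cstar i * c⁻¹)
    (K : Subgroup G) (hK : K = Subgroup.closure (Set.range s))
    (S : Finset (Entry G)) (hsub : IsSubsquare LG S)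
    (hr : ∃ e ∈ S, onLine e ((0 : Fin 3), r))
    (hc : ∃ e ∈ S, onLine e ((1 : Fin 3), c))
    (hl : ∀ i, ∃ e ∈ S, onLine e (ℓ i))
    (hmin : ∀ T : Finset (Entry G), IsSubsquare LG T →
      (∃ e ∈ T, onLine e ((0 : Fin 3), r)) → (∃ e ∈ T, onLine e ((1 : Fin 3), c)) →
      (∀ i, ∃ e ∈ T, onLine e (ℓ i)) → S ⊆ T) :
    {g : G | ∃ e ∈ S, e.2.1 = g} = {g : G | ∃ h ∈ K, g = h * c} ∧
      {g : G | ∃ e ∈ S, e.1 = g} = {g : G | ∃ h ∈ K, g = r * h} := by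
  classical
  obtain ⟨R, C, Sy, hRC, hCS, hT, L1, L2, L3⟩ := hsub
  have memS : ∀ e : Entry G, e ∈ S ↔
      (e.1 * e.2.1 = e.2.2 ∧ e.1 ∈ R ∧ e.2.1 ∈ C ∧ e.2.2 ∈ Sy) := by
    intro e
    rw [hT]
    simp [hLG, Finset.mem_filter, and_assoc]
  -- r ∈ R, c ∈ C
  have hrR : r ∈ R := by
    obtain ⟨e, heS, he⟩ := hr
    simp only [onLine] at he
    rcases he with ⟨-, he⟩ | ⟨h1, -⟩ | ⟨h2, -⟩
    · exact he ▸ ((memS e).1 heS).2.1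
    · exact absurd h1 (by decide)
    · exact absurd h2 (by decide)
  have hcC : c ∈ C := by
    obtain ⟨e, heS, he⟩ := hc
    simp only [onLine] at he
    rcases he with ⟨h0, -⟩ | ⟨-, he⟩ | ⟨h2, -⟩
    · exact absurd h0 (by decide)
    · exact he ▸ ((memS e).1 heS).2.2.1
    · exact absurd h2 (by decide)
  -- transfer lemmas
  have hC_Sy : ∀ x ∈ C, r * x ∈ Sy := by
    intro x hx
    obtain ⟨σ, ⟨hσSy, hσS⟩, -⟩ := L1 r hrR x hx
    have h1 : r * x = σ := ((memS _).1 hσS).1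
    exact h1 ▸ hσSy
  have hSy_C : ∀ y ∈ Sy, r⁻¹ * y ∈ C := by
    intro y hy
    obtain ⟨x, ⟨hxC, hxS⟩, -⟩ := L2 r hrR y hy
    have h1 : r * x = y := ((memS _).1 hxS).1
    have h2 : x = r⁻¹ * y := by rw [← h1]; group
    exact h2 ▸ hxC
  have hR_Sy : ∀ x ∈ R, x * c ∈ Sy := by
    intro x hx
    obtain ⟨σ, ⟨hσSy, hσS⟩, -⟩ := L1 x hx c hcC
    have h1 : x * c = σ := ((memS _).1 hσS).1
    exact h1 ▸ hσSy
  have hSy_R : ∀ y ∈ Sy, y * c⁻¹ ∈ R := by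
    intro y hy
    obtain ⟨x, ⟨hxR, hxS⟩, -⟩ := L3 c hcC y hy
    have h1 : x * c = y := ((memS _).1 hxS).1
    have h2 : x = y * c⁻¹ := by rw [← h1]; group
    exact h2 ▸ hxR
  -- H closure properties
  have hmulH : ∀ h1 h2 : G, h1 * c ∈ C → h2 * c ∈ C → (h1 * h2) * c ∈ C := by
    intro h1 h2 hh1 hh2
    have hr1 : r * h1 ∈ R := by
      have hA := hSy_R _ (hC_Sy _ hh1)
      have hB : r * (h1 * c) * c⁻¹ = r * h1 := by group
      exact hB ▸ hA
    obtain ⟨σ, ⟨hσSy, hσS⟩, -⟩ := L1 (r * h1) hr1 (h2 * c) hh2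
    have hσ : (r * h1) * (h2 * c) = σ := ((memS _).1 hσS).1
    have hA := hSy_C σ hσSy
    have heq : r⁻¹ * σ = (h1 * h2) * c := by rw [← hσ]; group
    exact heq ▸ hA
  have honeH : (1 : G) * c ∈ C := by simpa using hcC
  have hpowH : ∀ (h : G) (n : ℕ), h * c ∈ C → h ^ n * c ∈ C := by
    intro h n hh
    induction n with
    | zero => simpa using honeH
    | succ n ih => rw [pow_succ]; exact hmulH _ _ ih hh
  have hinvH : ∀ h : G, h * c ∈ C → h⁻¹ * c ∈ C := by
    intro h hh
    have hx : h * h ^ (orderOf h - 1) = 1 := by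
      rw [← pow_succ', Nat.sub_add_cancel (orderOf_pos h)]
      exact pow_orderOf_eq_one h
    rw [inv_eq_of_mul_eq_one_right hx]
    exact hpowH h _ hh
  let H : Subgroup G :=
    { carrier := {h : G | h * c ∈ C}
      one_mem' := honeH
      mul_mem' := fun {a b} ha hb => hmulH a b ha hb
      inv_mem' := fun {a} ha => hinvH a ha }
  have memH : ∀ h : G, h ∈ H ↔ h * c ∈ C := fun h => Iff.rfl
  have memR_iff : ∀ g : G, g ∈ R ↔ r⁻¹ * g ∈ H := by
    intro g
    constructor
    · intro hg
      have hA := hSy_C _ (hR_Sy g hg)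
      have hB : r⁻¹ * (g * c) = r⁻¹ * g * c := by group
      rw [memH]
      exact hB ▸ hA
    · intro hg
      have h1 : r⁻¹ * g * c ∈ C := (memH _).1 hg
      have h2 := hSy_R _ (hC_Sy _ h1)
      have h3 : r * (r⁻¹ * g * c) * c⁻¹ = g := by group
      exact h3 ▸ h2
  -- each s i lies in H
  have hsH : ∀ i, s i ∈ H := by
    intro i
    obtain ⟨e, heS, he⟩ := hl i
    obtain ⟨hme, heR, heC, heSy⟩ := (memS e).1 heS
    have hsc : s i * c = cstar i := by rw [hs i]; group
    rcases he with ⟨h0, he⟩ | ⟨h1, he⟩ | ⟨h2, he⟩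
    · rw [memH, hsc, hcstar i, if_neg (by rw [h0]; decide), if_neg (by rw [h0]; decide)]
      exact (memR_iff _).1 (he ▸ heR)
    · rw [memH, hsc, hcstar i, if_pos h1]
      exact he ▸ heC
    · rw [memH, hsc, hcstar i, if_neg (by rw [h2]; decide), if_pos h2]
      exact hSy_C _ (he ▸ heSy)
  have hKH : K ≤ H := by
    rw [hK]
    exact (Subgroup.closure_le H).2 (by rintro _ ⟨i, rfl⟩; exact hsH i)
  -- the coset subsquare T
  set T : Finset (Entry G) := LG.filter (fun e =>
      e.1 ∈ Finset.univ.filter (fun g => r⁻¹ * g ∈ K) ∧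
      e.2.1 ∈ Finset.univ.filter (fun g => g * c⁻¹ ∈ K) ∧
      e.2.2 ∈ Finset.univ.filter (fun g => r⁻¹ * g * c⁻¹ ∈ K)) with hTdef
  have memT : ∀ e : Entry G, e ∈ T ↔
      e.1 * e.2.1 = e.2.2 ∧ r⁻¹ * e.1 ∈ K ∧ e.2.1 * c⁻¹ ∈ K ∧ r⁻¹ * e.2.2 * c⁻¹ ∈ K := by
    intro e
    rw [hTdef]
    simp [hLG, Finset.mem_filter, and_assoc]
  have hTsub : IsSubsquare LG T := coset_subsquare LG hLG K r c
  have hrT : ∃ e ∈ T, onLine e ((0 : Fin 3), r) := by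
    refine ⟨(r, c, r * c), (memT _).2 ⟨rfl, by simpa using one_mem K,
      by simpa using one_mem K, ?_⟩, Or.inl ⟨rfl, rfl⟩⟩
    have h : r⁻¹ * (r * c) * c⁻¹ = 1 := by group
    rw [h]; exact one_mem K
  have hcT : ∃ e ∈ T, onLine e ((1 : Fin 3), c) := by
    refine ⟨(r, c, r * c), (memT _).2 ⟨rfl, by simpa using one_mem K,
      by simpa using one_mem K, ?_⟩, Or.inr (Or.inl ⟨rfl, rfl⟩)⟩
    have h : r⁻¹ * (r * c) * c⁻¹ = 1 := by group
    rw [h]; exact one_mem K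
  have hlT : ∀ i, ∃ e ∈ T, onLine e (ℓ i) := by
    intro i
    have hsiK : s i ∈ K := by rw [hK]; exact Subgroup.subset_closure ⟨i, rfl⟩
    obtain ⟨e, heS, he⟩ := hl i
    have hsc : s i = cstar i * c⁻¹ := hs i
    rcases he with ⟨h0, -⟩ | ⟨h1, -⟩ | ⟨h2, -⟩
    · -- row line of g := (ℓ i).2 ; cstar i = r⁻¹ * g * c
      have hcs : cstar i = r⁻¹ * (ℓ i).2 * c := by
        rw [hcstar i, if_neg (by rw [h0]; decide), if_neg (by rw [h0]; decide)]
      have hsi : s i = r⁻¹ * (ℓ i).2 := by rw [hsc, hcs]; group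
      refine ⟨((ℓ i).2, c, (ℓ i).2 * c), (memT _).2 ⟨rfl, ?_, by simpa using one_mem K, ?_⟩,
        Or.inl ⟨h0, rfl⟩⟩
      · exact hsi ▸ hsiK
      · have h : r⁻¹ * ((ℓ i).2 * c) * c⁻¹ = r⁻¹ * (ℓ i).2 := by group
        rw [h]; exact hsi ▸ hsiK
    · -- column line
      have hcs : cstar i = (ℓ i).2 := by rw [hcstar i, if_pos h1]
      have hsi : s i = (ℓ i).2 * c⁻¹ := by rw [hsc, hcs]
      refine ⟨(r, (ℓ i).2, r * (ℓ i).2), (memT _).2 ⟨rfl, by simpa using one_mem K,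
        hsi ▸ hsiK, ?_⟩, Or.inr (Or.inl ⟨h1, rfl⟩)⟩
      have h : r⁻¹ * (r * (ℓ i).2) * c⁻¹ = (ℓ i).2 * c⁻¹ := by group
      rw [h]; exact hsi ▸ hsiK
    · -- symbol line
      have hcs : cstar i = r⁻¹ * (ℓ i).2 := by
        rw [hcstar i, if_neg (by rw [h2]; decide), if_pos h2]
      have hsi : s i = r⁻¹ * (ℓ i).2 * c⁻¹ := by rw [hsc, hcs]
      refine ⟨(r, r⁻¹ * (ℓ i).2, (ℓ i).2), (memT _).2 ⟨by group, by simpa using one_mem K,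
        ?_, hsi ▸ hsiK⟩, Or.inr (Or.inr ⟨h2, rfl⟩)⟩
      exact hsi ▸ hsiK
  have hST : S ⊆ T := hmin T hTsub hrT hcT hlT
  constructor
  · ext g
    simp only [Set.mem_setOf_eq]
    constructor
    · rintro ⟨e, heS, rfl⟩
      have h1 := ((memT e).1 (hST heS)).2.2.1
      exact ⟨e.2.1 * c⁻¹, h1, by group⟩
    · rintro ⟨h, hh, rfl⟩
      have hhc : h * c ∈ C := (memH h).1 (hKH hh)
      obtain ⟨σ, ⟨hσSy, hσS⟩, -⟩ := L1 r hrR (h * c) hhc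
      exact ⟨(r, h * c, σ), hσS, rfl⟩
  · ext g
    simp only [Set.mem_setOf_eq]
    constructor
    · rintro ⟨e, heS, rfl⟩
      have h1 := ((memT e).1 (hST heS)).2.1
      exact ⟨r⁻¹ * e.1, h1, by group⟩
    · rintro ⟨h, hh, rfl⟩
      have hrh : r * h ∈ R := by
        rw [memR_iff]
        have heq : r⁻¹ * (r * h) = h := by group
        rw [heq]; exact hKH hh
      obtain ⟨σ, ⟨hσSy, hσS⟩, -⟩ := L1 (r * h) hrh c hcC
      exact ⟨(r * h, c, σ), hσS, rfl⟩
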